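/- Abstract form of Sect. 2.3–2.4: let G be a group, f : G → A a homomorphism to a group A, and suppose ker(f) is Jordan. If the image f(G) is finite, then G is Jordan. -/

import Mathlib

/-- A group `G` is Jordan with constant `J` if every finite subgroup of `G`
contains a normal abelian subgroup of index at most `J`. -/
def IsJordanWith (J : ℕ) (G : Type*) [Group G] : Prop :=
  ∀ H : Subgroup G, Finite H →
    ∃ A : Subgroup H, A.Normal ∧ (∀ a b : A, a * b = b * a) ∧ A.index ≤ J

/-- A group is Jordan if it is Jordan with some positive constant. -/
def IsJordanGroup (G : Type*) [Group G] : Prop := ∃ J : ℕ, 0 < J ∧ IsJordanWith J G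

/-- The index of the normal core is at most the factorial of the index,
in a finite group. -/
lemma index_normalCore_le_factorial {G : Type*} [Group G] [Finite G] (H : Subgroup G) :
    H.normalCore.index ≤ (H.index).factorial := by
  rw [Subgroup.normalCore_eq_ker, Subgroup.index_ker]
  have h1 : Nat.card (MulAction.toPermHom G (G ⧸ H)).range ≤
      Nat.card (Equiv.Perm (G ⧸ H)) :=
    Nat.card_le_card_of_injective _ Subtype.coe_injective
  refine h1.trans ?_
  have : DecidableEq (G ⧸ H) := Classical.decEq _
  have : Fintype (G ⧸ H) := Fintype.ofFinite _
  rw [Nat.card_eq_fintype_card, Fintype.card_perm, Subgroup.index, Nat.card_eq_fintype_card]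

/-- If `f : G → A` is a group homomorphism with Jordan kernel and finite image,
then `G` is Jordan. -/
theorem isJordan_of_ker_finite_image {G A : Type*} [Group G] [Group A] (f : G →* A)
    (hker : IsJordanGroup f.ker) (him : Finite f.range) : IsJordanGroup G := by
  obtain ⟨J, hJpos, hJ⟩ := hker
  set n := Nat.card f.range with hn
  refine ⟨(J * n).factorial, (J * n).factorial_pos, ?_⟩
  intro H hH
  -- the restriction of f to H
  set g : H →* A := f.comp H.subtype with hg
  set K : Subgroup H := g.ker with hK
  have hKindex : K.index ≤ n := by
    rw [hK, Subgroup.index_ker]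
    have hle : g.range ≤ f.range := by
      rintro x ⟨y, rfl⟩
      exact ⟨y, rfl⟩
    exact Nat.card_le_card_of_injective (Set.inclusion hle) (Set.inclusion_injective _)
  -- embed K into f.ker
  set ψ : K →* f.ker :=
    (H.subtype.comp K.subtype).codRestrict f.ker (fun x => by
      have : g x.1 = 1 := x.2
      simpa [hg] using this) with hψ
  have hψinj : Function.Injective ψ := by
    intro a b hab
    have := congrArg (Subtype.val) hab
    exact Subtype.ext (Subtype.ext this)
  set K' : Subgroup f.ker := ψ.range with hK'
  have hK'fin : Finite K' := Set.finite_range ψ |>.to_subtype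
  obtain ⟨A', _, hA'comm, hA'ind⟩ := hJ K' hK'fin
  -- push A' up to G
  set B : Subgroup f.ker := A'.map K'.subtype with hB
  set D : Subgroup G := B.map f.ker.subtype with hD
  set KG : Subgroup G := K.map H.subtype with hKG
  have hK'map : K'.map f.ker.subtype = KG := by
    ext x
    simp only [hK', hKG, Subgroup.mem_map, MonoidHom.mem_range]
    constructor
    · rintro ⟨y, ⟨k, rfl⟩, rfl⟩
      exact ⟨k, k.2, rfl⟩
    · rintro ⟨h, hh, rfl⟩
      exact ⟨ψ ⟨h, hh⟩, ⟨⟨h, hh⟩, rfl⟩, rfl⟩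
  have hDKG : D ≤ KG := by
    rw [hD, ← hK'map]
    exact Subgroup.map_mono (Subgroup.map_subtype_le A')
  have hKGH : KG ≤ H := Subgroup.map_subtype_le K
  have hDH : D ≤ H := hDKG.trans hKGH
  -- the candidate subgroup of H (before taking normal core)
  set C : Subgroup H := D.subgroupOf H with hC
  -- D is abelian
  have hDab : ∀ x y : G, x ∈ D → y ∈ D → x * y = y * x := by
    intro x y hx hy
    rw [hD, hB] at hx hy
    simp only [Subgroup.mem_map, MonoidHom.mem_range] at hx hy
    obtain ⟨x1, ⟨x2, hx2, rfl⟩, rfl⟩ := hx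
    obtain ⟨y1, ⟨y2, hy2, rfl⟩, rfl⟩ := hy
    have := hA'comm ⟨x2, hx2⟩ ⟨y2, hy2⟩
    have := congrArg (fun z : A' => ((((z : K') : f.ker) : G))) this
    simpa using this
  -- index of C
  have hCindex : C.index ≤ J * n := by
    have h1 : D.relIndex KG * KG.relIndex H = D.relIndex H :=
      Subgroup.relIndex_mul_relIndex D KG H hDKG hKGH
    have h2 : KG.relIndex H = K.index := by
      rw [Subgroup.relIndex, hKG, Subgroup.subgroupOf, Subgroup.comap_map_eq_self_of_injective
        (Subgroup.subtype_injective H)]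
    have h3 : D.relIndex KG = A'.index := by
      have hcomapD : D.comap f.ker.subtype = B := by
        rw [hD, Subgroup.comap_map_eq_self_of_injective (Subgroup.subtype_injective f.ker)]
      calc D.relIndex KG = D.relIndex (K'.map f.ker.subtype) := by rw [hK'map]
        _ = (D.comap f.ker.subtype).relIndex K' := (Subgroup.relIndex_comap (H := D) f.ker.subtype K').symm
        _ = B.relIndex K' := by rw [hcomapD]
        _ = A'.index := by
            rw [Subgroup.relIndex, hB, Subgroup.subgroupOf,
              Subgroup.comap_map_eq_self_of_injective (Subgroup.subtype_injective K')]
    have : C.index = D.relIndex H := rfl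
    rw [this, ← h1, h2, h3]
    exact Nat.mul_le_mul hA'ind hKindex
  refine ⟨C.normalCore, Subgroup.normalCore_normal C, ?_, ?_⟩
  · intro a b
    have ha : ((a : H) : G) ∈ D := (C.normalCore_le a.2 : (a : H) ∈ C)
    have hb : ((b : H) : G) ∈ D := (C.normalCore_le b.2 : (b : H) ∈ C)
    exact Subtype.ext (Subtype.ext (hDab _ _ ha hb))
  · calc C.normalCore.index ≤ (C.index).factorial := index_normalCore_le_factorial C
      _ ≤ (J * n).factorial := Nat.factorial_le hCindex
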